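/- (Caro–Wei bound) Let G = (V, E) be a finite simple graph and let d_v denote the degree of vertex v. Then the independence number satisfies α(G) ≥ ∑_{v ∈ V} 1/(1 + d_v). -/

import Mathlib

open Finset

theorem caro_wei_aux {V : Type*} [Fintype V] [DecidableEq V]
    (G : SimpleGraph V) [DecidableRel G.Adj] (A : Finset V) :
    ∃ s : Finset V, s ⊆ A ∧ (∀ u ∈ s, ∀ v ∈ s, ¬ G.Adj u v) ∧
      (∑ v ∈ A, (1 : ℝ) / (1 + ((G.neighborFinset v ∩ A).card : ℝ))) ≤ (s.card : ℝ) := by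
  induction A using Finset.strongInductionOn with
  | _ A ih =>
    rcases A.eq_empty_or_nonempty with rfl | hA
    · exact ⟨∅, by simp, by simp, by simp⟩
    · obtain ⟨v, hvA, hvmin⟩ := A.exists_min_image
        (fun u => ((G.neighborFinset u ∩ A).card : ℝ)) hA
      set N : Finset V := insert v (G.neighborFinset v ∩ A) with hN
      have hNA : N ⊆ A := by
        intro x hx
        rcases Finset.mem_insert.mp hx with rfl | hx
        · exact hvA
        · exact (Finset.mem_inter.mp hx).2
      set A' := A \ N with hA'
      have hvN : v ∈ N := Finset.mem_insert_self _ _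
      have hvA' : v ∉ A' := fun h => (Finset.mem_sdiff.mp h).2 hvN
      have hss : A' ⊂ A := Finset.ssubset_iff_of_subset (Finset.sdiff_subset)
        |>.mpr ⟨v, hvA, hvA'⟩
      obtain ⟨s', hs'sub, hs'ind, hs'sum⟩ := ih A' hss
      have hvs' : v ∉ s' := fun h => hvA' (hs'sub h)
      have hnadj : ∀ u ∈ s', ¬ G.Adj v u := by
        intro u hu hadj
        have huA' := hs'sub hu
        have := (Finset.mem_sdiff.mp huA').2
        exact this (Finset.mem_insert_of_mem
          (Finset.mem_inter.mpr ⟨(G.mem_neighborFinset v u).mpr hadj,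
            (Finset.mem_sdiff.mp huA').1⟩))
      refine ⟨insert v s', ?_, ?_, ?_⟩
      · intro x hx
        rcases Finset.mem_insert.mp hx with rfl | hx
        · exact hvA
        · exact (Finset.sdiff_subset) (hs'sub hx)
      · intro a ha b hb hab
        rcases Finset.mem_insert.mp ha with h1 | h1 <;>
          rcases Finset.mem_insert.mp hb with h2 | h2
        · rw [h1, h2] at hab; exact G.irrefl hab
        · rw [h1] at hab; exact hnadj b h2 hab
        · rw [h2] at hab; exact hnadj a h1 (G.adj_symm hab)
        · exact hs'ind a h1 b h2 hab
      · have hcard : ((insert v s').card : ℝ) = (s'.card : ℝ) + 1 := by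
          rw [Finset.card_insert_of_notMem hvs']; push_cast; ring
        rw [hcard]
        have hsplit : (∑ u ∈ A, (1 : ℝ) / (1 + ((G.neighborFinset u ∩ A).card : ℝ)))
            = (∑ u ∈ A', (1 : ℝ) / (1 + ((G.neighborFinset u ∩ A).card : ℝ)))
            + (∑ u ∈ N, (1 : ℝ) / (1 + ((G.neighborFinset u ∩ A).card : ℝ))) := by
          rw [hA']
          exact (Finset.sum_sdiff hNA).symm
        rw [hsplit]
        have h1 : (∑ u ∈ A', (1 : ℝ) / (1 + ((G.neighborFinset u ∩ A).card : ℝ)))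
            ≤ ∑ u ∈ A', (1 : ℝ) / (1 + ((G.neighborFinset u ∩ A').card : ℝ)) := by
          apply Finset.sum_le_sum
          intro u hu
          apply one_div_le_one_div_of_le
          · positivity
          · have : (G.neighborFinset u ∩ A').card ≤ (G.neighborFinset u ∩ A).card :=
              Finset.card_le_card (Finset.inter_subset_inter_left Finset.sdiff_subset)
            have h := (Nat.cast_le (α := ℝ)).mpr this
            linarith
        have h2 : (∑ u ∈ N, (1 : ℝ) / (1 + ((G.neighborFinset u ∩ A).card : ℝ))) ≤ 1 := by
          set d : ℝ := ((G.neighborFinset v ∩ A).card : ℝ) with hd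
          have hd0 : 0 ≤ d := Nat.cast_nonneg _
          have hbound : ∀ u ∈ N, (1 : ℝ) / (1 + ((G.neighborFinset u ∩ A).card : ℝ))
              ≤ 1 / (1 + d) := by
            intro u hu
            apply one_div_le_one_div_of_le
            · linarith
            · have := hvmin u (hNA hu)
              linarith
          calc (∑ u ∈ N, (1 : ℝ) / (1 + ((G.neighborFinset u ∩ A).card : ℝ)))
              ≤ ∑ _u ∈ N, 1 / (1 + d) := Finset.sum_le_sum hbound
            _ = (N.card : ℝ) * (1 / (1 + d)) := by rw [Finset.sum_const]; ring
            _ = 1 := by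
                have hvnot : v ∉ G.neighborFinset v ∩ A := by
                  simp [SimpleGraph.irrefl]
                have : (N.card : ℝ) = d + 1 := by
                  rw [hN, Finset.card_insert_of_notMem hvnot]; push_cast; ring
                rw [this]
                field_simp
                ring
        linarith
/-- Caro–Wei bound: `α(G) ≥ ∑_v 1/(1 + d_v)`. -/
theorem caro_wei_bound {V : Type*} [Fintype V] [DecidableEq V]
    (G : SimpleGraph V) [DecidableRel G.Adj] :
    ∃ s : Finset V, (∀ u ∈ s, ∀ v ∈ s, ¬ G.Adj u v) ∧
      (∑ v : V, (1 : ℝ) / (1 + (G.degree v : ℝ))) ≤ (s.card : ℝ) := by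
  obtain ⟨s, _, hind, hsum⟩ := caro_wei_aux G Finset.univ
  refine ⟨s, hind, ?_⟩
  simp only [Finset.inter_univ, SimpleGraph.card_neighborFinset_eq_degree] at hsum
  exact hsum
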